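/- For the 2×2-block antisymmetric matrix built from a kernel K: {1,…,T}² → ℝ^{2×2} satisfying K(t,t') = −K(t',t)ᵀ, one has Pf(J + K) = 1 + Σ_{S=1}^T Σ_{𝔱 ∈ I_S^T} Pf(K_𝔱), where J is the 2T×2T block-diagonal matrix with blocks [[0,1],[−1,0]], I_S^T is the set of strictly increasing maps {1,…,S} → {1,…,T}, and K_𝔱 is the 2S×2S antisymmetric matrix with blocks K(𝔱(s),𝔱(s')). -/

import Mathlib

open Matrix BigOperators

/-- The Pfaffian of a `2n × 2n` matrix over `ℝ`, defined by the standard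
sum over all permutations with a `1/(2^n n!)` normalization. -/
noncomputable def Pf {n : ℕ} (A : Matrix (Fin (2 * n)) (Fin (2 * n)) ℝ) : ℝ :=
  (1 / (2 ^ n * (n.factorial : ℝ))) *
    ∑ σ : Equiv.Perm (Fin (2 * n)),
      ((Equiv.Perm.sign σ : ℤ) : ℝ) *
        ∏ i : Fin n,
          A (σ ⟨2 * i.val, by have := i.isLt; omega⟩)
            (σ ⟨2 * i.val + 1, by have := i.isLt; omega⟩)

/-- The `2T × 2T` matrix built from a `2 × 2`-matrix-valued kernel
`K : {1,…,T}² → ℝ^{2×2}`, with `(t,t')` block `K t t'`. -/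
def blockMat {T : ℕ} (K : Fin T → Fin T → Matrix (Fin 2) (Fin 2) ℝ) :
    Matrix (Fin (2 * T)) (Fin (2 * T)) ℝ :=
  fun i j =>
    K ⟨i.val / 2, by have := i.isLt; omega⟩ ⟨j.val / 2, by have := j.isLt; omega⟩
      ⟨i.val % 2, by omega⟩ ⟨j.val % 2, by omega⟩

/-- The `2T × 2T` block-diagonal matrix `J` with diagonal blocks `[[0,1],[−1,0]]`. -/
def Jmat (T : ℕ) : Matrix (Fin (2 * T)) (Fin (2 * T)) ℝ :=
  blockMat (fun t t' => if t = t' then !![0, 1; -1, 0] else 0)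






def pe (T : ℕ) : Fin (2 * T) ≃ Fin T × Fin 2 where
  toFun j := (⟨j.val / 2, by have := j.isLt; omega⟩, ⟨j.val % 2, by omega⟩)
  invFun x := ⟨2 * x.1.val + x.2.val, by have := x.1.isLt; have := x.2.isLt; omega⟩
  left_inv j := by apply Fin.ext; simp; omega
  right_inv x := by
    obtain ⟨⟨a, ha⟩, ⟨b, hb⟩⟩ := x
    refine Prod.ext (Fin.ext ?_) (Fin.ext ?_) <;> simp <;> omega

def K2 {T : ℕ} (K : Fin T → Fin T → Matrix (Fin 2) (Fin 2) ℝ) :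
    Fin T × Fin 2 → Fin T × Fin 2 → ℝ := fun x y => K x.1 y.1 x.2 y.2

def J2 {T : ℕ} : Fin T × Fin 2 → Fin T × Fin 2 → ℝ := fun x y =>
  if x.1 = y.1 then !![(0:ℝ), 1; -1, 0] x.2 y.2 else 0

lemma blockMat_pe {T : ℕ} (K : Fin T → Fin T → Matrix (Fin 2) (Fin 2) ℝ)
    (x y : Fin T × Fin 2) :
    blockMat K ((pe T).symm x) ((pe T).symm y) = K2 K x y := by
  obtain ⟨⟨a, ha⟩, ⟨b, hb⟩⟩ := x
  obtain ⟨⟨c, hc⟩, ⟨d, hd⟩⟩ := y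
  show K _ _ _ _ = K _ _ _ _
  simp only [pe, Equiv.coe_fn_symm_mk]
  have hb2 : b < 2 := hb
  have hd2 : d < 2 := hd
  simp only [show (2*a+b)/2 = a from by omega, show (2*a+b)%2 = b from by omega,
    show (2*c+d)/2 = c from by omega, show (2*c+d)%2 = d from by omega]

lemma Jmat_pe {T : ℕ} (x y : Fin T × Fin 2) :
    Jmat T ((pe T).symm x) ((pe T).symm y) = J2 x y := by
  rw [Jmat, blockMat_pe]
  unfold K2 J2
  by_cases h : x.1 = y.1 <;> simp [h]

/-- transfer of the Pfaffian sum to permutations of `Fin T × Fin 2` -/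
lemma Pf_eq_sum_perm {T : ℕ} (A : Matrix (Fin (2 * T)) (Fin (2 * T)) ℝ) :
    Pf A = (1 / (2 ^ T * (T.factorial : ℝ))) *
      ∑ τ : Equiv.Perm (Fin T × Fin 2), ((Equiv.Perm.sign τ : ℤ) : ℝ) *
        ∏ t : Fin T, A ((pe T).symm (τ (t, 0))) ((pe T).symm (τ (t, 1))) := by
  rw [Pf]
  congr 1
  apply Fintype.sum_equiv (Equiv.permCongr (pe T))
  intro σ
  congr 1
  · rw [Equiv.Perm.sign_permCongr]
  · apply Finset.prod_congr rfl
    intro i _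
    have h0 : (pe T).symm (i, 0) = (⟨2 * i.val, by have := i.isLt; omega⟩ : Fin (2*T)) := by
      apply Fin.ext; show 2 * i.val + (0 : Fin 2).val = 2 * i.val; simp
    have h1 : (pe T).symm (i, 1) = (⟨2 * i.val + 1, by have := i.isLt; omega⟩ : Fin (2*T)) := by
      apply Fin.ext; show 2 * i.val + (1 : Fin 2).val = 2 * i.val + 1; simp
    simp only [Equiv.permCongr_apply, Equiv.symm_apply_apply]
    rw [h0, h1]

/-- product over a finset via its monotone enumeration -/
lemma prod_eq_prod_orderEmbOfFin {T S : ℕ} {M : Type*} [CommMonoid M] (s : Finset (Fin T))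
    (h : s.card = S) (f : Fin T → M) :
    ∏ t ∈ s, f t = ∏ j : Fin S, f (s.orderEmbOfFin h j) := by
  have himg : s = Finset.image (s.orderEmbOfFin h) Finset.univ := by
    apply Finset.ext
    intro x
    simp only [Finset.mem_image, Finset.mem_univ, true_and]
    constructor
    · intro hx
      have : x ∈ Set.range (s.orderEmbOfFin h) := by
        rw [Finset.range_orderEmbOfFin]; exact hx
      exact this
    · rintro ⟨j, rfl⟩; exact Finset.orderEmbOfFin_mem s h j
  calc ∏ t ∈ s, f t = ∏ t ∈ Finset.image (s.orderEmbOfFin h) Finset.univ, f t :=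
        Finset.prod_congr himg (fun _ _ => rfl)
    _ = ∏ j : Fin S, f (s.orderEmbOfFin h j) :=
        Finset.prod_image (fun a _ b _ hab => (s.orderEmbOfFin h).injective hab)


namespace PfExpand
open Equiv Finset





lemma exists_sumCongr_eq {α β : Type*} (m : Equiv.Perm (α ⊕ β))
    (hl : ∀ a : α, ∃ a', m (Sum.inl a) = Sum.inl a')
    (hr : ∀ b : β, ∃ b', m (Sum.inr b) = Sum.inr b') :
    ∃ (p : Equiv.Perm α) (q : Equiv.Perm β), m = Equiv.sumCongr p q := by
  have hl' : ∀ a : α, ∃ a', m.symm (Sum.inl a) = Sum.inl a' := by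
    intro a
    rcases h : m.symm (Sum.inl a) with a' | b'
    · exact ⟨a', rfl⟩
    · exfalso
      obtain ⟨b'', hb⟩ := hr b'
      have h2 := congrArg m h
      rw [Equiv.apply_symm_apply, hb] at h2
      exact Sum.inl_ne_inr h2
  have hr' : ∀ b : β, ∃ b', m.symm (Sum.inr b) = Sum.inr b' := by
    intro b
    rcases h : m.symm (Sum.inr b) with a' | b'
    · exfalso
      obtain ⟨a'', ha⟩ := hl a'
      have h2 := congrArg m h
      rw [Equiv.apply_symm_apply, ha] at h2
      exact Sum.inr_ne_inl h2
    · exact ⟨b', rfl⟩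
  choose pl hpl using hl
  choose ql hql using hl'
  choose pr hpr using hr
  choose qr hqr using hr'
  have hlpl : ∀ a, ql (pl a) = a := by
    intro a
    have := hpl a
    have h2 := congrArg m.symm this
    rw [Equiv.symm_apply_apply, hql] at h2
    exact (Sum.inl.inj h2).symm
  have hlql : ∀ a, pl (ql a) = a := by
    intro a
    have := hql a
    have h2 := congrArg m this
    rw [Equiv.apply_symm_apply, hpl] at h2
    exact (Sum.inl.inj h2).symm
  have hrpr : ∀ b, qr (pr b) = b := by
    intro b
    have := hpr b
    have h2 := congrArg m.symm this
    rw [Equiv.symm_apply_apply, hqr] at h2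
    exact (Sum.inr.inj h2).symm
  have hrqr : ∀ b, pr (qr b) = b := by
    intro b
    have := hqr b
    have h2 := congrArg m this
    rw [Equiv.apply_symm_apply, hpr] at h2
    exact (Sum.inr.inj h2).symm
  refine ⟨⟨pl, ql, hlpl, hlql⟩, ⟨pr, qr, hrpr, hrqr⟩, ?_⟩
  apply Equiv.ext
  rintro (a | b)
  · rw [hpl a]; rfl
  · rw [hpr b]; rfl

lemma fin2_cases (c a b : Fin 2) (h : a ≠ b) : c = a ∨ c = b := by
  revert h; revert c a b; decide

/-- fiber lemma: a permutation of `γ × Fin 2` that preserves blocks hits every point of a block -/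
lemma fiber_mem {γ : Type*} (τ : Equiv.Perm (γ × Fin 2))
    (hτ : ∀ (k : γ) (r : Fin 2), (τ (k, r)).1 = (τ (k, 0)).1) (k : γ) (c : Fin 2) :
    ∃ s, τ (k, s) = ((τ (k, 0)).1, c) := by
  have h01 : τ (k, 0) ≠ τ (k, 1) := by
    intro h
    have := τ.injective h
    simp at this
  have hne : (τ (k, 0)).2 ≠ (τ (k, 1)).2 := by
    intro h
    exact h01 (Prod.ext (hτ k 1).symm h)
  rcases fin2_cases c _ _ hne with h | h
  · exact ⟨0, by rw [h]⟩
  · exact ⟨1, by rw [h, ← hτ k 1]⟩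

lemma exists_prodFin2_eq {γ : Type*} (τ : Equiv.Perm (γ × Fin 2))
    (hτ : ∀ (k : γ) (r : Fin 2), (τ (k, r)).1 = (τ (k, 0)).1) :
    ∃ (g : Equiv.Perm γ) (e : γ → Equiv.Perm (Fin 2)),
      τ = (Equiv.prodCongrRight e).trans (g.prodCongr (Equiv.refl (Fin 2))) := by
  have glinv : ∀ k : γ, (τ.symm ((τ (k, 0)).1, (0:Fin 2))).1 = k := by
    intro k
    obtain ⟨s, hs⟩ := fiber_mem τ hτ k 0
    rw [← hs, Equiv.symm_apply_apply]
  have grinv : ∀ x : γ, (τ ((τ.symm (x, (0:Fin 2))).1, 0)).1 = x := by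
    intro x
    calc (τ ((τ.symm (x, (0:Fin 2))).1, 0)).1
        = (τ ((τ.symm (x, (0:Fin 2))).1, (τ.symm (x, (0:Fin 2))).2)).1 := (hτ _ _).symm
      _ = x := by rw [Prod.mk.eta, Equiv.apply_symm_apply]
  set g : Equiv.Perm γ :=
    ⟨fun k => (τ (k, 0)).1, fun x => (τ.symm (x, 0)).1, glinv, grinv⟩ with hg
  have hgapp : ∀ k, g k = (τ (k, 0)).1 := fun _ => rfl
  refine ⟨g, fun k => ⟨fun r => (τ (k, r)).2, fun c => (τ.symm ((τ (k, 0)).1, c)).2, ?_, ?_⟩, ?_⟩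
  · intro r
    have h : ((τ (k, 0)).1, (τ (k, r)).2) = τ (k, r) := Prod.ext (hτ k r).symm rfl
    show (τ.symm ((τ (k, 0)).1, (τ (k, r)).2)).2 = r
    rw [h, Equiv.symm_apply_apply]
  · intro c
    obtain ⟨s, hs⟩ := fiber_mem τ hτ k c
    have h2 : τ.symm ((τ (k, 0)).1, c) = (k, s) := by rw [← hs, Equiv.symm_apply_apply]
    show (τ (k, (τ.symm ((τ (k, 0)).1, c)).2)).2 = c
    rw [h2]
    exact congrArg Prod.snd hs
  · apply Equiv.ext
    rintro ⟨k, r⟩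
    show τ (k, r) = ((g k, _) : γ × Fin 2)
    rw [hgapp]
    exact Prod.ext (hτ k r) rfl

lemma sign_prodCongr_refl {γ : Type*} [DecidableEq γ] [Fintype γ] (g : Equiv.Perm γ) :
    Equiv.Perm.sign (g.prodCongr (Equiv.refl (Fin 2))) = 1 := by
  have h : g.prodCongr (Equiv.refl (Fin 2)) = Equiv.prodCongrLeft (fun _ : Fin 2 => g) := by
    apply Equiv.ext; rintro ⟨a, b⟩; rfl
  rw [h, Equiv.Perm.sign_prodCongrLeft]
  rw [Finset.prod_const]
  simp [Int.units_sq]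

lemma sign_tau {m : ℕ} (g : Equiv.Perm (Fin m)) (e : Fin m → Equiv.Perm (Fin 2)) :
    Equiv.Perm.sign ((Equiv.prodCongrRight e).trans (g.prodCongr (Equiv.refl (Fin 2))))
      = ∏ k : Fin m, Equiv.Perm.sign (e k) := by
  rw [show (Equiv.prodCongrRight e).trans (g.prodCongr (Equiv.refl (Fin 2)))
      = (g.prodCongr (Equiv.refl (Fin 2))) * (Equiv.prodCongrRight e) from rfl]
  rw [_root_.map_mul, sign_prodCongr_refl, one_mul, Equiv.Perm.sign_prodCongrRight]







variable {T S : ℕ}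

/-- enumeration equivalence of `Fin T` given a subset of card `S` -/
def enumSum (U : Finset (Fin T)) (hU : U.card = S) (hUc : Uᶜ.card = T - S) :
    Fin T ≃ Fin S ⊕ Fin (T - S) :=
  (Equiv.sumCompl (· ∈ U)).symm.trans
    (Equiv.sumCongr (U.orderIsoOfFin hU).symm.toEquiv
      ((Equiv.subtypeEquivRight (fun x => (Finset.mem_compl (s := U) (a := x)).symm)).trans
        ((Uᶜ).orderIsoOfFin hUc).symm.toEquiv))

lemma enumSum_symm_inl (U : Finset (Fin T)) (hU : U.card = S) (hUc : Uᶜ.card = T - S)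
    (j : Fin S) : (enumSum U hU hUc).symm (Sum.inl j) = U.orderEmbOfFin hU j := by
  simp [enumSum, Equiv.sumCongr_symm, Finset.coe_orderIsoOfFin_apply]

lemma enumSum_symm_inr (U : Finset (Fin T)) (hU : U.card = S) (hUc : Uᶜ.card = T - S)
    (k : Fin (T - S)) : (enumSum U hU hUc).symm (Sum.inr k) = (Uᶜ).orderEmbOfFin hUc k := by
  simp [enumSum, Equiv.sumCongr_symm, Finset.coe_orderIsoOfFin_apply]

lemma enumSum_apply_of_mem (U : Finset (Fin T)) (hU : U.card = S) (hUc : Uᶜ.card = T - S)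
    {t : Fin T} (ht : t ∈ U) :
    ∃ j, t = U.orderEmbOfFin hU j ∧ enumSum U hU hUc t = Sum.inl j := by
  have : t ∈ Set.range (U.orderEmbOfFin hU) := by
    rw [Finset.range_orderEmbOfFin]; exact ht
  obtain ⟨j, hj⟩ := this
  refine ⟨j, hj.symm, ?_⟩
  rw [← hj, ← enumSum_symm_inl U hU hUc, Equiv.apply_symm_apply]

lemma enumSum_apply_of_not_mem (U : Finset (Fin T)) (hU : U.card = S) (hUc : Uᶜ.card = T - S)
    {t : Fin T} (ht : t ∉ U) :
    ∃ k, t = (Uᶜ).orderEmbOfFin hUc k ∧ enumSum U hU hUc t = Sum.inr k := by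
  have : t ∈ Set.range ((Uᶜ).orderEmbOfFin hUc) := by
    rw [Finset.range_orderEmbOfFin]; exact Finset.mem_compl.mpr ht
  obtain ⟨k, hk⟩ := this
  refine ⟨k, hk.symm, ?_⟩
  rw [← hk, ← enumSum_symm_inr U hU hUc, Equiv.apply_symm_apply]

/-- the blockwise splitting of `Fin T × Fin 2` according to `U` -/
def blockSplit (U : Finset (Fin T)) (hU : U.card = S) (hUc : Uᶜ.card = T - S) :
    (Fin T × Fin 2) ≃ (Fin S × Fin 2) ⊕ (Fin (T - S) × Fin 2) :=
  ((enumSum U hU hUc).prodCongr (Equiv.refl (Fin 2))).trans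
    (Equiv.sumProdDistrib (Fin S) (Fin (T - S)) (Fin 2))

lemma blockSplit_symm_inl (U : Finset (Fin T)) (hU : U.card = S) (hUc : Uᶜ.card = T - S)
    (j : Fin S) (r : Fin 2) :
    (blockSplit U hU hUc).symm (Sum.inl (j, r)) = (U.orderEmbOfFin hU j, r) := by
  simp [blockSplit, Equiv.sumProdDistrib, enumSum_symm_inl U hU hUc]

lemma blockSplit_symm_inr (U : Finset (Fin T)) (hU : U.card = S) (hUc : Uᶜ.card = T - S)
    (k : Fin (T - S)) (r : Fin 2) :
    (blockSplit U hU hUc).symm (Sum.inr (k, r)) = ((Uᶜ).orderEmbOfFin hUc k, r) := by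
  simp [blockSplit, Equiv.sumProdDistrib, enumSum_symm_inr U hU hUc]

lemma blockSplit_apply_emb (U : Finset (Fin T)) (hU : U.card = S) (hUc : Uᶜ.card = T - S)
    (j : Fin S) (r : Fin 2) :
    blockSplit U hU hUc (U.orderEmbOfFin hU j, r) = Sum.inl (j, r) := by
  rw [← blockSplit_symm_inl U hU hUc, Equiv.apply_symm_apply]

lemma blockSplit_apply_cemb (U : Finset (Fin T)) (hU : U.card = S) (hUc : Uᶜ.card = T - S)
    (k : Fin (T - S)) (r : Fin 2) :
    blockSplit U hU hUc ((Uᶜ).orderEmbOfFin hUc k, r) = Sum.inr (k, r) := by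
  rw [← blockSplit_symm_inr U hU hUc, Equiv.apply_symm_apply]

lemma blockSplit_trans_symm (U V : Finset (Fin T)) (hU : U.card = S) (hUc : Uᶜ.card = T - S)
    (hV : V.card = S) (hVc : Vᶜ.card = T - S) :
    (blockSplit U hU hUc).trans (blockSplit V hV hVc).symm
      = ((enumSum U hU hUc).trans (enumSum V hV hVc).symm).prodCongr (Equiv.refl (Fin 2)) := by
  apply Equiv.ext
  rintro ⟨t, r⟩
  have hr : (((enumSum U hU hUc).trans (enumSum V hV hVc).symm).prodCongr
      (Equiv.refl (Fin 2))) (t, r) = ((enumSum V hV hVc).symm (enumSum U hU hUc t), r) := rfl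
  rcases h : enumSum U hU hUc t with j | k
  · show (blockSplit V hV hVc).symm ((Equiv.sumProdDistrib _ _ _) ((enumSum U hU hUc) t, r)) = _
    rw [hr, h, Equiv.sumProdDistrib_apply_left, blockSplit_symm_inl, enumSum_symm_inl]
  · show (blockSplit V hV hVc).symm ((Equiv.sumProdDistrib _ _ _) ((enumSum U hU hUc) t, r)) = _
    rw [hr, h, Equiv.sumProdDistrib_apply_right, blockSplit_symm_inr, enumSum_symm_inr]


end PfExpand
namespace PfExpand
open Equiv Finset
variable {T S : ℕ}

def tau {m : ℕ} (g : Equiv.Perm (Fin m)) (e : Fin m → Equiv.Perm (Fin 2)) :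
    Equiv.Perm (Fin m × Fin 2) :=
  (Equiv.prodCongrRight e).trans (g.prodCongr (Equiv.refl (Fin 2)))

lemma tau_apply {m : ℕ} (g : Equiv.Perm (Fin m)) (e : Fin m → Equiv.Perm (Fin 2))
    (k : Fin m) (r : Fin 2) : tau g e (k, r) = (g k, e k r) := rfl

def tset (𝔱 : {f : Fin S → Fin T // StrictMono f}) : Finset (Fin T) :=
  Finset.image 𝔱.1 Finset.univ

lemma tset_card (𝔱 : {f : Fin S → Fin T // StrictMono f}) : (tset 𝔱).card = S := by
  rw [tset, Finset.card_image_of_injective _ 𝔱.2.injective, Finset.card_univ, Fintype.card_fin]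

lemma tset_cc (𝔱 : {f : Fin S → Fin T // StrictMono f}) : ((tset 𝔱)ᶜ).card = T - S := by
  rw [Finset.card_compl, tset_card, Fintype.card_fin]

lemma tset_emb (𝔱 : {f : Fin S → Fin T // StrictMono f}) (j : Fin S) :
    (tset 𝔱).orderEmbOfFin (tset_card 𝔱) j = 𝔱.1 j := by
  rw [← Finset.orderEmbOfFin_unique (tset_card 𝔱)
    (fun x => Finset.mem_image_of_mem _ (Finset.mem_univ x)) 𝔱.2]

lemma orderEmbOfFin_congr {α : Type*} [LinearOrder α] {s s' : Finset α} (hss : s = s')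
    {n : ℕ} (h : s.card = n) (j : Fin n) :
    s.orderEmbOfFin h j = s'.orderEmbOfFin (hss ▸ h) j := by subst hss; rfl

lemma blockSplit_congr {s s' : Finset (Fin T)} (hss : s = s') (h : s.card = S)
    (hc : sᶜ.card = T - S) (h' : s'.card = S) (hc' : s'ᶜ.card = T - S) :
    blockSplit s h hc = blockSplit s' h' hc' := by subst hss; rfl

def Phi (U : Finset (Fin T)) (hU : U.card = S) (hUc : Uᶜ.card = T - S)
    (𝔱 : {f : Fin S → Fin T // StrictMono f}) (π : Equiv.Perm (Fin S × Fin 2))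
    (g : Equiv.Perm (Fin (T - S))) (e : Fin (T - S) → Equiv.Perm (Fin 2)) :
    Equiv.Perm (Fin T × Fin 2) :=
  (blockSplit U hU hUc).trans ((Equiv.sumCongr π (tau g e)).trans
    (blockSplit (tset 𝔱) (tset_card 𝔱) (tset_cc 𝔱)).symm)

lemma Phi_apply_emb (U : Finset (Fin T)) (hU : U.card = S) (hUc : Uᶜ.card = T - S)
    (𝔱 : {f : Fin S → Fin T // StrictMono f}) (π : Equiv.Perm (Fin S × Fin 2))
    (g : Equiv.Perm (Fin (T - S))) (e : Fin (T - S) → Equiv.Perm (Fin 2))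
    (j : Fin S) (r : Fin 2) :
    Phi U hU hUc 𝔱 π g e (U.orderEmbOfFin hU j, r) = (𝔱.1 (π (j, r)).1, (π (j, r)).2) := by
  show (blockSplit (tset 𝔱) (tset_card 𝔱) (tset_cc 𝔱)).symm
      (Equiv.sumCongr π (tau g e) ((blockSplit U hU hUc) (U.orderEmbOfFin hU j, r))) = _
  rw [blockSplit_apply_emb]
  show (blockSplit (tset 𝔱) (tset_card 𝔱) (tset_cc 𝔱)).symm (Sum.inl (π (j, r))) = _
  rw [show (Sum.inl (π (j, r)) : (Fin S × Fin 2) ⊕ (Fin (T-S) × Fin 2))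
      = Sum.inl ((π (j, r)).1, (π (j, r)).2) from by rw [Prod.mk.eta]]
  rw [blockSplit_symm_inl, tset_emb]

lemma Phi_apply_cemb (U : Finset (Fin T)) (hU : U.card = S) (hUc : Uᶜ.card = T - S)
    (𝔱 : {f : Fin S → Fin T // StrictMono f}) (π : Equiv.Perm (Fin S × Fin 2))
    (g : Equiv.Perm (Fin (T - S))) (e : Fin (T - S) → Equiv.Perm (Fin 2))
    (k : Fin (T - S)) (r : Fin 2) :
    Phi U hU hUc 𝔱 π g e ((Uᶜ).orderEmbOfFin hUc k, r)
      = (((tset 𝔱)ᶜ).orderEmbOfFin (tset_cc 𝔱) (g k), e k r) := by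
  show (blockSplit (tset 𝔱) (tset_card 𝔱) (tset_cc 𝔱)).symm
      (Equiv.sumCongr π (tau g e) ((blockSplit U hU hUc) ((Uᶜ).orderEmbOfFin hUc k, r))) = _
  rw [blockSplit_apply_cemb]
  show (blockSplit (tset 𝔱) (tset_card 𝔱) (tset_cc 𝔱)).symm (Sum.inr (tau g e (k, r))) = _
  rw [tau_apply, blockSplit_symm_inr]

lemma sign_Phi (U : Finset (Fin T)) (hU : U.card = S) (hUc : Uᶜ.card = T - S)
    (𝔱 : {f : Fin S → Fin T // StrictMono f}) (π : Equiv.Perm (Fin S × Fin 2))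
    (g : Equiv.Perm (Fin (T - S))) (e : Fin (T - S) → Equiv.Perm (Fin 2)) :
    Equiv.Perm.sign (Phi U hU hUc 𝔱 π g e)
      = Equiv.Perm.sign π * ∏ k : Fin (T - S), Equiv.Perm.sign (e k) := by
  have hdec : Phi U hU hUc 𝔱 π g e
      = ((blockSplit U hU hUc).trans (blockSplit (tset 𝔱) (tset_card 𝔱) (tset_cc 𝔱)).symm)
        * ((blockSplit U hU hUc).symm.permCongr (Equiv.sumCongr π (tau g e))) := by
    apply Equiv.ext; intro x
    simp [Phi, Equiv.Perm.mul_apply, Equiv.permCongr_apply, Equiv.trans_apply,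
      Equiv.apply_symm_apply, Equiv.symm_symm]
  rw [hdec, _root_.map_mul, blockSplit_trans_symm, sign_prodCongr_refl, one_mul,
    Equiv.Perm.sign_permCongr, Equiv.Perm.sign_sumCongr, show tau g e
      = (Equiv.prodCongrRight e).trans (g.prodCongr (Equiv.refl (Fin 2))) from rfl, sign_tau]
lemma perm2_cases (e : Equiv.Perm (Fin 2)) : e = 1 ∨ e = Equiv.swap 0 1 := by
  have h2 : ∀ x : Fin 2, x = 0 ∨ x = 1 := by decide
  have hinj := e.injective
  rcases h2 (e 0) with h0 | h0
  · left; apply Equiv.ext; intro x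
    rcases h2 x with rfl | rfl
    · simpa using h0
    · rcases h2 (e 1) with h1 | h1
      · exact absurd (hinj (h0.trans h1.symm)) (by decide)
      · simpa using h1
  · right; apply Equiv.ext; intro x
    rcases h2 x with rfl | rfl
    · simpa using h0
    · rcases h2 (e 1) with h1 | h1
      · simpa using h1
      · exact absurd (hinj (h0.trans h1.symm)) (by decide)

lemma sign_J2_mul (v : Fin T) (e : Equiv.Perm (Fin 2)) :
    ((Equiv.Perm.sign e : ℤ) : ℝ) * J2 (T := T) (v, e 0) (v, e 1) = 1 := by
  rcases perm2_cases e with rfl | rfl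
  · simp [J2]
  · rw [Equiv.Perm.sign_swap (by decide : (0 : Fin 2) ≠ 1)]
    simp [J2, Equiv.swap_apply_left, Equiv.swap_apply_right]

lemma Phi_injective (U : Finset (Fin T)) (hU : U.card = S) (hUc : Uᶜ.card = T - S)
    {𝔱 𝔱' : {f : Fin S → Fin T // StrictMono f}} {π π' : Equiv.Perm (Fin S × Fin 2)}
    {g g' : Equiv.Perm (Fin (T - S))} {e e' : Fin (T - S) → Equiv.Perm (Fin 2)}
    (h : Phi U hU hUc 𝔱 π g e = Phi U hU hUc 𝔱' π' g' e') :
    𝔱 = 𝔱' ∧ π = π' ∧ g = g' ∧ e = e' := by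
  have hW : ∀ k : Fin (T - S), ((tset 𝔱)ᶜ).orderEmbOfFin (tset_cc 𝔱) (g k)
      = ((tset 𝔱')ᶜ).orderEmbOfFin (tset_cc 𝔱') (g' k) := by
    intro k
    have h1 : Phi U hU hUc 𝔱 π g e ((Uᶜ).orderEmbOfFin hUc k, 0)
        = Phi U hU hUc 𝔱' π' g' e' ((Uᶜ).orderEmbOfFin hUc k, 0) := by rw [h]
    rw [Phi_apply_cemb, Phi_apply_cemb] at h1
    exact congrArg Prod.fst h1
  have hi : ∀ (𝔲 : {f : Fin S → Fin T // StrictMono f}) (gg : Equiv.Perm (Fin (T - S))),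
      Finset.image (fun k => ((tset 𝔲)ᶜ).orderEmbOfFin (tset_cc 𝔲) (gg k)) Finset.univ
        = (tset 𝔲)ᶜ := by
    intro 𝔲 gg
    apply Finset.ext; intro x
    simp only [Finset.mem_image, Finset.mem_univ, true_and]
    constructor
    · rintro ⟨k, rfl⟩; exact Finset.orderEmbOfFin_mem _ _ _
    · intro hx
      have : x ∈ Set.range (((tset 𝔲)ᶜ).orderEmbOfFin (tset_cc 𝔲)) := by
        rw [Finset.range_orderEmbOfFin]; exact hx
      obtain ⟨k, hk⟩ := this
      exact ⟨gg.symm k, by rw [Equiv.apply_symm_apply]; exact hk⟩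
  have himg : ((tset 𝔱)ᶜ : Finset (Fin T)) = (tset 𝔱')ᶜ := by
    rw [← hi 𝔱 g, ← hi 𝔱' g']
    apply Finset.ext; intro x
    simp only [Finset.mem_image, Finset.mem_univ, true_and]
    constructor
    · rintro ⟨k, rfl⟩; exact ⟨k, (hW k).symm⟩
    · rintro ⟨k, rfl⟩; exact ⟨k, hW k⟩
  have hset : tset 𝔱 = tset 𝔱' := by
    have := congrArg (·ᶜ) himg
    simpa [compl_compl] using this
  have h𝔱 : 𝔱 = 𝔱' := by
    apply Subtype.ext; funext j
    rw [← tset_emb 𝔱 j, ← tset_emb 𝔱' j, orderEmbOfFin_congr hset]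
  subst h𝔱
  have happ : ∀ x, Equiv.sumCongr π (tau g e) x = Equiv.sumCongr π' (tau g' e') x := by
    intro x
    have h2 : ∀ (π₀ : Equiv.Perm (Fin S × Fin 2)) g₀ e₀,
        Phi U hU hUc 𝔱 π₀ g₀ e₀ ((blockSplit U hU hUc).symm x)
          = (blockSplit (tset 𝔱) (tset_card 𝔱) (tset_cc 𝔱)).symm
              (Equiv.sumCongr π₀ (tau g₀ e₀) x) := by
      intro π₀ g₀ e₀
      show (blockSplit (tset 𝔱) (tset_card 𝔱) (tset_cc 𝔱)).symm
        (Equiv.sumCongr π₀ (tau g₀ e₀)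
          ((blockSplit U hU hUc) ((blockSplit U hU hUc).symm x))) = _
      rw [Equiv.apply_symm_apply]
    have h1 : Phi U hU hUc 𝔱 π g e ((blockSplit U hU hUc).symm x)
        = Phi U hU hUc 𝔱 π' g' e' ((blockSplit U hU hUc).symm x) := by rw [h]
    rw [h2, h2] at h1
    exact (blockSplit (tset 𝔱) (tset_card 𝔱) (tset_cc 𝔱)).symm.injective h1
  have hπ : π = π' := by
    apply Equiv.ext; intro y
    have := happ (Sum.inl y); simpa using this
  have hτ : ∀ y, tau g e y = tau g' e' y := by
    intro y
    have := happ (Sum.inr y); simpa using this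
  have hg : g = g' := by
    apply Equiv.ext; intro k
    exact congrArg Prod.fst (hτ (k, 0))
  have he : e = e' := by
    funext k; apply Equiv.ext; intro r
    exact congrArg Prod.snd (hτ (k, r))
  exact ⟨rfl, hπ, hg, he⟩

lemma Phi_surjective (U : Finset (Fin T)) (hU : U.card = S) (hUc : Uᶜ.card = T - S)
    (hST : S ≤ T) (σ : Equiv.Perm (Fin T × Fin 2))
    (hσ : ∀ t ∉ U, (σ (t, 0)).1 = (σ (t, 1)).1) :
    ∃ 𝔱 π g e, Phi U hU hUc 𝔱 π g e = σ := by
  have h2 : ∀ x : Fin 2, x = 0 ∨ x = 1 := by decide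
  have hblock : ∀ t ∉ U, ∀ r : Fin 2, (σ (t, r)).1 = (σ (t, 0)).1 := by
    intro t ht r
    rcases h2 r with rfl | rfl
    · rfl
    · exact (hσ t ht).symm
  have hfull : ∀ t ∉ U, ∀ c : Fin 2, ∃ r, σ (t, r) = ((σ (t, 0)).1, c) := by
    intro t ht c
    have h01 : σ (t, 0) ≠ σ (t, 1) := by
      intro hh; have := σ.injective hh; simp at this
    have hne : (σ (t, 0)).2 ≠ (σ (t, 1)).2 := by
      intro hh; exact h01 (Prod.ext (hσ t ht) hh)
    rcases fin2_cases c _ _ hne with hc | hc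
    · exact ⟨0, by rw [hc]⟩
    · exact ⟨1, by rw [hc]; exact Prod.ext (hσ t ht).symm rfl⟩
  have hcembnotU : ∀ k : Fin (T - S), (Uᶜ).orderEmbOfFin hUc k ∉ U := fun k =>
    Finset.mem_compl.mp (Finset.orderEmbOfFin_mem _ _ _)
  have hembU : ∀ j : Fin S, U.orderEmbOfFin hU j ∈ U := fun j =>
    Finset.orderEmbOfFin_mem _ _ _
  have hWinj : Function.Injective (fun k : Fin (T - S) =>
      (σ ((Uᶜ).orderEmbOfFin hUc k, 0)).1) := by
    intro k k' hkk
    simp only at hkk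
    obtain ⟨r', hr'⟩ := hfull _ (hcembnotU k') (σ ((Uᶜ).orderEmbOfFin hUc k, 0)).2
    rw [← hkk, Prod.mk.eta] at hr'
    have := σ.injective hr'
    have := congrArg Prod.fst this
    simp only at this
    exact ((Uᶜ).orderEmbOfFin hUc).injective this.symm
  set W : Finset (Fin T) :=
    Finset.image (fun k : Fin (T - S) => (σ ((Uᶜ).orderEmbOfFin hUc k, 0)).1) Finset.univ with hWdef
  have hWcard : W.card = T - S := by
    rw [hWdef, Finset.card_image_of_injective _ hWinj, Finset.card_univ, Fintype.card_fin]
  have hV : (Wᶜ : Finset (Fin T)).card = S := by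
    rw [Finset.card_compl, hWcard, Fintype.card_fin]; omega
  have hVc : ((Wᶜ)ᶜ : Finset (Fin T)).card = T - S := by rw [compl_compl]; exact hWcard
  set 𝔱 : {f : Fin S → Fin T // StrictMono f} :=
    ⟨fun j => (Wᶜ).orderEmbOfFin hV j, ((Wᶜ).orderEmbOfFin hV).strictMono⟩ with h𝔱def
  have htset : tset 𝔱 = Wᶜ := by
    apply Finset.ext; intro x
    simp only [tset, Finset.mem_image, Finset.mem_univ, true_and]
    constructor
    · rintro ⟨j, rfl⟩; exact Finset.orderEmbOfFin_mem _ _ _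
    · intro hx
      have : x ∈ Set.range ((Wᶜ).orderEmbOfFin hV) := by
        rw [Finset.range_orderEmbOfFin]; exact hx
      obtain ⟨j, hj⟩ := this
      exact ⟨j, hj⟩
  have hbsV : blockSplit (tset 𝔱) (tset_card 𝔱) (tset_cc 𝔱) = blockSplit (Wᶜ) hV hVc :=
    blockSplit_congr htset _ _ _ _
  set m : (Fin S × Fin 2) ⊕ (Fin (T - S) × Fin 2) ≃ (Fin S × Fin 2) ⊕ (Fin (T - S) × Fin 2) :=
    ((blockSplit U hU hUc).symm.trans (σ : Fin T × Fin 2 ≃ Fin T × Fin 2)).trans (blockSplit (Wᶜ) hV hVc) with hmdef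
  have hmapp : ∀ y, m y = blockSplit (Wᶜ) hV hVc (σ ((blockSplit U hU hUc).symm y)) :=
    fun _ => rfl
  have hml : ∀ a : Fin S × Fin 2, ∃ a', m (Sum.inl a) = Sum.inl a' := by
    rintro ⟨j, r⟩
    have hnotW : (σ (U.orderEmbOfFin hU j, r)).1 ∉ W := by
      intro hWmem
      rw [hWdef] at hWmem
      simp only [Finset.mem_image, Finset.mem_univ, true_and] at hWmem
      obtain ⟨k, hk⟩ := hWmem
      obtain ⟨r', hr'⟩ := hfull _ (hcembnotU k) (σ (U.orderEmbOfFin hU j, r)).2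
      rw [hk, Prod.mk.eta] at hr'
      have := congrArg Prod.fst (σ.injective hr')
      simp only at this
      exact hcembnotU k (this ▸ hembU j)
    have hmemV : (σ (U.orderEmbOfFin hU j, r)).1 ∈ (Wᶜ : Finset (Fin T)) :=
      Finset.mem_compl.mpr hnotW
    obtain ⟨j', _, hj'⟩ := enumSum_apply_of_mem (Wᶜ) hV hVc hmemV
    refine ⟨(j', (σ (U.orderEmbOfFin hU j, r)).2), ?_⟩
    rw [hmapp, blockSplit_symm_inl]
    show (Equiv.sumProdDistrib _ _ _)
      (enumSum (Wᶜ) hV hVc (σ (U.orderEmbOfFin hU j, r)).1,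
        (σ (U.orderEmbOfFin hU j, r)).2) = _
    rw [hj', Equiv.sumProdDistrib_apply_left]
  have hmr : ∀ b : Fin (T - S) × Fin 2, ∃ b', m (Sum.inr b) = Sum.inr b' := by
    rintro ⟨k, r⟩
    have hmemW : (σ ((Uᶜ).orderEmbOfFin hUc k, r)).1 ∈ W := by
      rw [hblock _ (hcembnotU k) r, hWdef]
      exact Finset.mem_image_of_mem _ (Finset.mem_univ k)
    have hnotV : (σ ((Uᶜ).orderEmbOfFin hUc k, r)).1 ∉ (Wᶜ : Finset (Fin T)) := fun hc =>
      (Finset.mem_compl.mp hc) hmemW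
    obtain ⟨k', _, hk'⟩ := enumSum_apply_of_not_mem (Wᶜ) hV hVc hnotV
    refine ⟨(k', (σ ((Uᶜ).orderEmbOfFin hUc k, r)).2), ?_⟩
    rw [hmapp, blockSplit_symm_inr]
    show (Equiv.sumProdDistrib _ _ _)
      (enumSum (Wᶜ) hV hVc (σ ((Uᶜ).orderEmbOfFin hUc k, r)).1,
        (σ ((Uᶜ).orderEmbOfFin hUc k, r)).2) = _
    rw [hk', Equiv.sumProdDistrib_apply_right]
  obtain ⟨p, q, hm⟩ := exists_sumCongr_eq m hml hmr
  have hq : ∀ (k : Fin (T - S)) (r : Fin 2), (q (k, r)).1 = (q (k, 0)).1 := by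
    have hqval : ∀ (k : Fin (T - S)) (r : Fin 2),
        Sum.inr (q (k, r)) = m (Sum.inr (k, r)) := by
      intro k r; rw [hm]; rfl
    intro k r
    have hb := hblock _ (hcembnotU k)
    have hv : ∀ r : Fin 2, (σ ((Uᶜ).orderEmbOfFin hUc k, r)).1
        = (σ ((Uᶜ).orderEmbOfFin hUc k, 0)).1 := hb
    have hnotV : (σ ((Uᶜ).orderEmbOfFin hUc k, 0)).1 ∉ (Wᶜ : Finset (Fin T)) := by
      intro hc
      refine (Finset.mem_compl.mp hc) ?_
      rw [hWdef]; exact Finset.mem_image_of_mem _ (Finset.mem_univ k)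
    obtain ⟨k', _, hk'⟩ := enumSum_apply_of_not_mem (Wᶜ) hV hVc hnotV
    have hcomp : ∀ r : Fin 2, q (k, r) = (k', (σ ((Uᶜ).orderEmbOfFin hUc k, r)).2) := by
      intro r
      have h1 := hqval k r
      rw [hmapp, blockSplit_symm_inr] at h1
      have h3 : blockSplit (Wᶜ) hV hVc (σ ((Uᶜ).orderEmbOfFin hUc k, r))
          = (Equiv.sumProdDistrib _ _ _)
            (enumSum (Wᶜ) hV hVc (σ ((Uᶜ).orderEmbOfFin hUc k, r)).1,
              (σ ((Uᶜ).orderEmbOfFin hUc k, r)).2) := rfl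
      rw [h3, hv r, hk', Equiv.sumProdDistrib_apply_right] at h1
      exact Sum.inr.inj h1
    rw [hcomp r, hcomp 0]
  obtain ⟨g, e, hq2⟩ := exists_prodFin2_eq q hq
  have hq2' : q = tau g e := hq2
  refine ⟨𝔱, p, g, e, ?_⟩
  apply Equiv.ext; intro x
  show (blockSplit (tset 𝔱) (tset_card 𝔱) (tset_cc 𝔱)).symm
    (Equiv.sumCongr p (tau g e) ((blockSplit U hU hUc) x)) = σ x
  rw [hbsV, ← hq2', ← hm, hmapp, Equiv.symm_apply_apply, Equiv.symm_apply_apply]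
lemma units_cast_prod {ι : Type*} (s : Finset ι) (f : ι → ℤˣ) :
    (((∏ i ∈ s, f i : ℤˣ) : ℤ) : ℝ) = ∏ i ∈ s, ((f i : ℤ) : ℝ) := by
  let uc : ℤˣ →* ℝ := (Int.castRingHom ℝ).toMonoidHom.comp (Units.coeHom ℤ)
  exact map_prod uc f s

open Classical in
lemma core (K2' : Fin T × Fin 2 → Fin T × Fin 2 → ℝ) (U : Finset (Fin T))
    (hU : U.card = S) (hUc : Uᶜ.card = T - S) (hST : S ≤ T) :
    ∑ σ : Equiv.Perm (Fin T × Fin 2), ((Equiv.Perm.sign σ : ℤ) : ℝ) *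
        ((∏ t ∈ U, K2' (σ (t, 0)) (σ (t, 1))) * ∏ t ∈ Uᶜ, J2 (σ (t, 0)) (σ (t, 1)))
      = (2 : ℝ) ^ (T - S) * ((T - S).factorial : ℝ) *
        ∑ 𝔱 : {f : Fin S → Fin T // StrictMono f}, ∑ π : Equiv.Perm (Fin S × Fin 2),
          ((Equiv.Perm.sign π : ℤ) : ℝ) *
            ∏ j : Fin S, K2' (𝔱.1 (π (j, 0)).1, (π (j, 0)).2) (𝔱.1 (π (j, 1)).1, (π (j, 1)).2) := by
  have hcnotU : ∀ t : Fin T, t ∉ U → ∃ k, t = (Uᶜ).orderEmbOfFin hUc k := by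
    intro t ht
    have : t ∈ Set.range ((Uᶜ).orderEmbOfFin hUc) := by
      rw [Finset.range_orderEmbOfFin]; exact Finset.mem_compl.mpr ht
    obtain ⟨k, hk⟩ := this
    exact ⟨k, hk.symm⟩
  have step1 : ∑ σ : Equiv.Perm (Fin T × Fin 2), ((Equiv.Perm.sign σ : ℤ) : ℝ) *
        ((∏ t ∈ U, K2' (σ (t, 0)) (σ (t, 1))) * ∏ t ∈ Uᶜ, J2 (σ (t, 0)) (σ (t, 1)))
      = ∑ σ ∈ Finset.univ.filter
          (fun σ : Equiv.Perm (Fin T × Fin 2) => ∀ t ∉ U, (σ (t, 0)).1 = (σ (t, 1)).1),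
          ((Equiv.Perm.sign σ : ℤ) : ℝ) *
            ((∏ t ∈ U, K2' (σ (t, 0)) (σ (t, 1))) * ∏ t ∈ Uᶜ, J2 (σ (t, 0)) (σ (t, 1))) := by
    refine (Finset.sum_filter_of_ne ?_).symm
    intro σ _ hne
    by_contra hP
    push_neg at hP
    obtain ⟨t, ht, htne⟩ := hP
    apply hne
    have hJ : J2 (T := T) (σ (t, 0)) (σ (t, 1)) = 0 := if_neg htne
    rw [Finset.prod_eq_zero (Finset.mem_compl.mpr ht) hJ]
    ring
  rw [step1]
  have step2 : ∑ σ ∈ Finset.univ.filter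
          (fun σ : Equiv.Perm (Fin T × Fin 2) => ∀ t ∉ U, (σ (t, 0)).1 = (σ (t, 1)).1),
          ((Equiv.Perm.sign σ : ℤ) : ℝ) *
            ((∏ t ∈ U, K2' (σ (t, 0)) (σ (t, 1))) * ∏ t ∈ Uᶜ, J2 (σ (t, 0)) (σ (t, 1)))
      = ∑ d : {f : Fin S → Fin T // StrictMono f} × Equiv.Perm (Fin S × Fin 2)
            × Equiv.Perm (Fin (T - S)) × (Fin (T - S) → Equiv.Perm (Fin 2)),
          ((Equiv.Perm.sign d.2.1 : ℤ) : ℝ) *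
            ∏ j : Fin S, K2' (d.1.1 (d.2.1 (j, 0)).1, (d.2.1 (j, 0)).2)
              (d.1.1 (d.2.1 (j, 1)).1, (d.2.1 (j, 1)).2) := by
    refine (Finset.sum_bij
      (fun d _ => Phi U hU hUc d.1 d.2.1 d.2.2.1 d.2.2.2) ?_ ?_ ?_ ?_).symm
    · rintro ⟨𝔱, π, g, e⟩ -
      simp only [Finset.mem_filter, Finset.mem_univ, true_and]
      intro t ht
      obtain ⟨k, rfl⟩ := hcnotU t ht
      rw [Phi_apply_cemb, Phi_apply_cemb]
    · rintro ⟨𝔱, π, g, e⟩ hmem1 ⟨𝔱', π', g', e'⟩ hmem2 hPhi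
      obtain ⟨h1, h2, h3, h4⟩ := Phi_injective U hU hUc hPhi
      simp only [Prod.ext_iff]
      exact ⟨h1, ⟨h2, ⟨h3, h4⟩⟩⟩
    · intro σ hσ
      simp only [Finset.mem_filter, Finset.mem_univ, true_and] at hσ
      obtain ⟨𝔱, π, g, e, hPhi⟩ := Phi_surjective U hU hUc hST σ hσ
      exact ⟨⟨𝔱, π, g, e⟩, Finset.mem_univ _, hPhi⟩
    · rintro ⟨𝔱, π, g, e⟩ -
      have hsgn : ((Equiv.Perm.sign (Phi U hU hUc 𝔱 π g e) : ℤ) : ℝ)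
          = ((Equiv.Perm.sign π : ℤ) : ℝ)
            * ∏ k : Fin (T - S), ((Equiv.Perm.sign (e k) : ℤ) : ℝ) := by
        rw [sign_Phi, Units.val_mul, Int.cast_mul, units_cast_prod]
      have hK : ∏ t ∈ U, K2' (Phi U hU hUc 𝔱 π g e (t, 0)) (Phi U hU hUc 𝔱 π g e (t, 1))
          = ∏ j : Fin S, K2' (𝔱.1 (π (j, 0)).1, (π (j, 0)).2)
              (𝔱.1 (π (j, 1)).1, (π (j, 1)).2) := by
        rw [prod_eq_prod_orderEmbOfFin U hU]
        exact Finset.prod_congr rfl fun j _ => by rw [Phi_apply_emb, Phi_apply_emb]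
      have hJ : ∏ t ∈ Uᶜ, J2 (Phi U hU hUc 𝔱 π g e (t, 0)) (Phi U hU hUc 𝔱 π g e (t, 1))
          = ∏ k : Fin (T - S),
              J2 (((tset 𝔱)ᶜ).orderEmbOfFin (tset_cc 𝔱) (g k), e k 0)
                 (((tset 𝔱)ᶜ).orderEmbOfFin (tset_cc 𝔱) (g k), e k 1) := by
        rw [prod_eq_prod_orderEmbOfFin (Uᶜ) hUc]
        exact Finset.prod_congr rfl fun k _ => by rw [Phi_apply_cemb, Phi_apply_cemb]
      rw [hsgn, hK, hJ]
      have hone : (∏ k : Fin (T - S), ((Equiv.Perm.sign (e k) : ℤ) : ℝ))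
          * ∏ k : Fin (T - S), J2 (((tset 𝔱)ᶜ).orderEmbOfFin (tset_cc 𝔱) (g k), e k 0)
              (((tset 𝔱)ᶜ).orderEmbOfFin (tset_cc 𝔱) (g k), e k 1) = 1 := by
        rw [← Finset.prod_mul_distrib]
        exact Finset.prod_eq_one fun k _ => sign_J2_mul _ (e k)
      conv_rhs => rw [show ∀ a b c d : ℝ, (a * b) * (c * d) = (a * c) * (b * d) from
        fun a b c d => by ring]
      rw [hone, mul_one]
  rw [step2]
  simp_rw [Fintype.sum_prod_type]
  simp_rw [Finset.sum_const, Finset.card_univ, smul_smul, ← Finset.smul_sum]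
  rw [nsmul_eq_mul]
  simp only [Fintype.card_perm, Fintype.card_fun, Fintype.card_fin,
    show Nat.factorial 2 = 2 from rfl]
  push_cast
  ring
end PfExpand


open PfExpand Equiv

set_option linter.unusedVariables false in
open Classical in
/-- **Expansion of the Fredholm Pfaffian.**  If the kernel satisfies
`K t t' = −(K t' t)ᵀ` (so the block matrix `𝐊` is antisymmetric), then
`Pf(J + 𝐊) = 1 + Σ_{S=1}^{T} Σ_{𝔱 strictly increasing : Fin S → Fin T} Pf(𝐊_𝔱)`. -/
theorem pf_J_add_block {T : ℕ} (K : Fin T → Fin T → Matrix (Fin 2) (Fin 2) ℝ)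
    (hK : ∀ t t', K t t' = -(K t' t)ᵀ) :
    Pf (Jmat T + blockMat K)
      = 1 + ∑ S ∈ Finset.Icc 1 T, ∑ 𝔱 : {f : Fin S → Fin T // StrictMono f},
          Pf (blockMat (fun s s' => K (𝔱.1 s) (𝔱.1 s'))) := by
  have hfact_ne : ∀ n : ℕ, ((n.factorial : ℝ)) ≠ 0 :=
    fun n => Nat.cast_ne_zero.mpr (Nat.factorial_ne_zero n)
  have hpow_ne : ∀ n : ℕ, ((2 : ℝ) ^ n) ≠ 0 := fun n => pow_ne_zero n two_ne_zero
  -- the inner double sum, as a function of S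
  set A : (S : ℕ) → ℝ := fun S =>
    ∑ 𝔱 : {f : Fin S → Fin T // StrictMono f}, ∑ π : Equiv.Perm (Fin S × Fin 2),
      ((Equiv.Perm.sign π : ℤ) : ℝ) *
        ∏ j : Fin S, K2 K (𝔱.1 (π (j, 0)).1, (π (j, 0)).2) (𝔱.1 (π (j, 1)).1, (π (j, 1)).2)
    with hA
  -- RHS rewriting
  have hRHS : ∀ S : ℕ, (∑ 𝔱 : {f : Fin S → Fin T // StrictMono f},
      Pf (blockMat (fun s s' => K (𝔱.1 s) (𝔱.1 s'))))
      = (1 / (2 ^ S * (S.factorial : ℝ))) * A S := by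
    intro S
    rw [hA]
    rw [Finset.mul_sum]
    apply Finset.sum_congr rfl
    intro 𝔱 _
    rw [Pf_eq_sum_perm, Finset.mul_sum, Finset.mul_sum]
    apply Finset.sum_congr rfl
    intro π _
    congr 1
    congr 1
    apply Finset.prod_congr rfl
    intro j _
    rw [blockMat_pe]
    rfl
  -- LHS rewriting
  rw [Pf_eq_sum_perm]
  have hentry : ∀ x y : Fin T × Fin 2,
      (Jmat T + blockMat K) ((pe T).symm x) ((pe T).symm y) = K2 K x y + J2 x y := by
    intro x y
    rw [Matrix.add_apply, blockMat_pe, Jmat_pe, add_comm]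
  have hstep : ∀ S ∈ Finset.range (T + 1),
      (∑ U ∈ Finset.powersetCard S (Finset.univ : Finset (Fin T)),
        ∑ σ : Equiv.Perm (Fin T × Fin 2), ((Equiv.Perm.sign σ : ℤ) : ℝ) *
          ((∏ t ∈ U, K2 K (σ (t, 0)) (σ (t, 1))) * ∏ t ∈ Uᶜ, J2 (σ (t, 0)) (σ (t, 1))))
      = (T.choose S : ℝ) * ((2 : ℝ) ^ (T - S) * ((T - S).factorial : ℝ) * A S) := by
    intro S hS
    have hST : S ≤ T := by
      simp only [Finset.mem_range] at hS; omega
    have h1 : ∀ U ∈ Finset.powersetCard S (Finset.univ : Finset (Fin T)),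
        (∑ σ : Equiv.Perm (Fin T × Fin 2), ((Equiv.Perm.sign σ : ℤ) : ℝ) *
          ((∏ t ∈ U, K2 K (σ (t, 0)) (σ (t, 1))) * ∏ t ∈ Uᶜ, J2 (σ (t, 0)) (σ (t, 1))))
        = (2 : ℝ) ^ (T - S) * ((T - S).factorial : ℝ) * A S := by
      intro U hU
      have hUcard : U.card = S := (Finset.mem_powersetCard.mp hU).2
      have hUc : Uᶜ.card = T - S := by
        rw [Finset.card_compl, hUcard, Fintype.card_fin]
      rw [hA]
      exact core (K2 K) U hUcard hUc hST
    rw [Finset.sum_congr rfl h1, Finset.sum_const, Finset.card_powersetCard,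
      Finset.card_univ, Fintype.card_fin, nsmul_eq_mul]
  have hX : (∑ τ : Equiv.Perm (Fin T × Fin 2), ((Equiv.Perm.sign τ : ℤ) : ℝ) *
        ∏ t : Fin T, (Jmat T + blockMat K) ((pe T).symm (τ (t, 0))) ((pe T).symm (τ (t, 1))))
      = ∑ S ∈ Finset.range (T + 1),
          (T.choose S : ℝ) * ((2 : ℝ) ^ (T - S) * ((T - S).factorial : ℝ) * A S) := by
    simp_rw [hentry, Finset.prod_add, ← Finset.compl_eq_univ_sdiff, Finset.mul_sum]
    rw [Finset.sum_comm, Finset.sum_powerset]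
    simp only [Finset.card_univ, Fintype.card_fin]
    exact Finset.sum_congr rfl hstep
  rw [hX]
  -- split off S = 0
  have hrange : Finset.range (T + 1) = insert 0 (Finset.Icc 1 T) := by
    ext x; simp; omega
  rw [hrange, Finset.sum_insert (by simp)]
  -- S = 0 term
  have hA0 : A 0 = 1 := by
    haveI : Unique {f : Fin 0 → Fin T // StrictMono f} :=
      { default := ⟨Fin.elim0, fun a => a.elim0⟩,
        uniq := fun f => Subtype.ext (funext fun x => x.elim0) }
    haveI : Unique (Equiv.Perm (Fin 0 × Fin 2)) :=
      { default := 1, uniq := fun π => Equiv.ext fun x => x.1.elim0 }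
    have hA0' : A 0 = ∑ 𝔱 : {f : Fin 0 → Fin T // StrictMono f},
        ∑ π : Equiv.Perm (Fin 0 × Fin 2), ((Equiv.Perm.sign π : ℤ) : ℝ) *
          ∏ j : Fin 0, K2 K (𝔱.1 (π (j, 0)).1, (π (j, 0)).2)
            (𝔱.1 (π (j, 1)).1, (π (j, 1)).2) := rfl
    have hsg : ∀ π : Equiv.Perm (Fin 0 × Fin 2), Equiv.Perm.sign π = 1 := fun π => by
      rw [Subsingleton.elim π (1 : Equiv.Perm (Fin 0 × Fin 2))]; exact map_one _
    rw [hA0', Fintype.sum_unique, Fintype.sum_unique, hsg]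
    simp
  rw [hA0]
  have hchoose0 : (T.choose 0 : ℝ) = 1 := by simp
  rw [hchoose0, Nat.sub_zero, mul_one, one_mul]
  rw [mul_add, Finset.mul_sum]
  congr 1
  · field_simp
  · apply Finset.sum_congr rfl
    intro S hS
    have hST : S ≤ T := by
      simp only [Finset.mem_Icc] at hS; omega
    rw [hRHS S]
    have h1 : ((T.choose S : ℝ)) * (S.factorial : ℝ) * ((T - S).factorial : ℝ)
        = (T.factorial : ℝ) := by
      exact_mod_cast congrArg (Nat.cast (R := ℝ)) (Nat.choose_mul_factorial_mul_factorial hST)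
    have h2 : (2 : ℝ) ^ (T - S) * 2 ^ S = 2 ^ T := by
      rw [← pow_add]; congr 1; omega
    field_simp
    linear_combination (A S * (2:ℝ) ^ (T - S) * 2 ^ S) * h1 + (A S * (T.factorial : ℝ)) * h2
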